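/- Penalized-reward guarantee: Suppose the per-step model error satisfies E_{s'∼T̂(·|s,a)}[V^π_M(s')] − E_{s'∼T(·|s,a)}[V^π_M(s')] ≤ u(s,a) for an admissible error estimator u ≥ 0 and all (s,a). Then for the penalized MDP M̃ with reward r̃(s,a) = r(s,a) − γ·u(s,a) (and dynamics T̂), J(π, M) ≥ J(π, M̃) for every policy π. -/

import Mathlib

open scoped BigOperators

/-- A Markov decision process on finite state space `S` and action space `A`,
with reward `r`, transition kernel `T` (as a function giving next-state probabilities),
and discount factor `γ`. -/
structure MDP (S A : Type*) where
  r : S → A → ℝ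
  T : S → A → S → ℝ
  γ : ℝ

variable {S A : Type*} [Fintype S] [Fintype A] [DecidableEq S]

/-- `π` is a stationary stochastic policy: `π s` is a probability distribution over actions. -/
def IsPolicy (π : S → A → ℝ) : Prop :=
  (∀ s a, 0 ≤ π s a) ∧ ∀ s, ∑ a, π s a = 1

/-- `T` is a transition kernel: `T s a` is a probability distribution over next states. -/
def IsKernel (T : S → A → S → ℝ) : Prop :=
  (∀ s a s', 0 ≤ T s a s') ∧ ∀ s a, ∑ s', T s a s' = 1

/-- `μ` is a probability distribution on states. -/
def IsDist (μ : S → ℝ) : Prop :=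
  (∀ s, 0 ≤ μ s) ∧ ∑ s, μ s = 1

/-- `stateDist M π μ₀ t s` is the probability `P^π_{M,t}(s)` that the state at time `t`
equals `s` when executing policy `π` in MDP `M` from initial distribution `μ₀`. -/
noncomputable def stateDist (M : MDP S A) (π : S → A → ℝ) (μ₀ : S → ℝ) : ℕ → S → ℝ
  | 0 => μ₀
  | t + 1 => fun s' => ∑ s, ∑ a, stateDist M π μ₀ t s * π s a * M.T s a s'

/-- Expected reward at time `t` under policy `π` in MDP `M` started from `μ₀`. -/
noncomputable def expRewardAt (M : MDP S A) (π : S → A → ℝ) (μ₀ : S → ℝ) (t : ℕ) : ℝ :=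
  ∑ s, ∑ a, stateDist M π μ₀ t s * π s a * M.r s a

/-- Value function `V^π_M(s) = E[∑_t γ^t r(s_t,a_t) | s₀ = s]`. -/
noncomputable def Vval (M : MDP S A) (π : S → A → ℝ) (s : S) : ℝ :=
  ∑' t : ℕ, M.γ ^ t * expRewardAt M π (fun x => if x = s then (1 : ℝ) else 0) t

/-- Expected discounted return `J(π, M) = E_{s ∼ μ₀}[V^π_M(s)]`. -/
noncomputable def Jval (M : MDP S A) (π : S → A → ℝ) (μ₀ : S → ℝ) : ℝ :=
  ∑ s, μ₀ s * Vval M π s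

/-- Normalized discounted occupancy measure
`ρ^π_M(s,a) = (1-γ) ∑_t γ^t P^π_{M,t}(s) π(a|s)`. -/
noncomputable def occupancy (M : MDP S A) (π : S → A → ℝ) (μ₀ : S → ℝ) (s : S) (a : A) : ℝ :=
  (1 - M.γ) * (∑' t : ℕ, M.γ ^ t * stateDist M π μ₀ t s) * π s a

/-- Total variation distance between finite distributions: `sup_E |p(E) - q(E)|`. -/
noncomputable def tvFin {X : Type*} [Fintype X] (p q : X → ℝ) : ℝ :=
  ⨆ E : Finset X, |∑ x ∈ E, p x - ∑ x ∈ E, q x|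

set_option linter.unusedSectionVars false
set_option linter.unusedVariables false

section Aux

open Filter

variable {S A : Type*} [Fintype S] [Fintype A] [DecidableEq S]

/-- Generic expectation of `f` over state distribution `μ` and policy `π`. -/
noncomputable def EW (π : S → A → ℝ) (μ : S → ℝ) (f : S → A → ℝ) : ℝ :=
  ∑ s, ∑ a, μ s * π s a * f s a

/-- One-step pushforward of a state distribution. -/
noncomputable def stepD (M : MDP S A) (π : S → A → ℝ) (μ : S → ℝ) : S → ℝ :=
  fun s' => ∑ s, ∑ a, μ s * π s a * M.T s a s'

noncomputable def dirac (x : S) : S → ℝ := fun y => if y = x then (1 : ℝ) else 0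

lemma sum_rot {α β γ : Type*} [Fintype α] [Fintype β] [Fintype γ] (h : α → β → γ → ℝ) :
    ∑ s, ∑ a, ∑ x, h s a x = ∑ x, ∑ s, ∑ a, h s a x :=
  calc ∑ s, ∑ a, ∑ x, h s a x
      = ∑ s, ∑ x, ∑ a, h s a x := Finset.sum_congr rfl fun s _ => Finset.sum_comm
    _ = ∑ x, ∑ s, ∑ a, h s a x := Finset.sum_comm

lemma stateDist_succ_eq (M : MDP S A) (π : S → A → ℝ) (μ : S → ℝ) (t : ℕ) :
    stateDist M π μ (t + 1) = stepD M π (stateDist M π μ t) := rfl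

lemma stateDist_shift (M : MDP S A) (π : S → A → ℝ) (μ : S → ℝ) (t : ℕ) :
    stateDist M π μ (t + 1) = stateDist M π (stepD M π μ) t := by
  induction t with
  | zero => rfl
  | succ t ih =>
      rw [stateDist_succ_eq, ih, ← stateDist_succ_eq]

lemma stepD_isDist {M : MDP S A} {π : S → A → ℝ} {μ : S → ℝ}
    (hT : IsKernel M.T) (hπ : IsPolicy π) (hμ : IsDist μ) : IsDist (stepD M π μ) := by
  constructor
  · intro s'
    refine Finset.sum_nonneg fun s _ => Finset.sum_nonneg fun a _ => ?_
    exact mul_nonneg (mul_nonneg (hμ.1 s) (hπ.1 s a)) (hT.1 s a s')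
  · have h1 : ∑ s', stepD M π μ s' = ∑ s, ∑ a, ∑ s', μ s * π s a * M.T s a s' := by
      unfold stepD
      rw [Finset.sum_comm]
      exact Finset.sum_congr rfl fun s _ => Finset.sum_comm
    rw [h1]
    have h2 : ∀ s ∈ Finset.univ (α := S), ∑ a, ∑ s', μ s * π s a * M.T s a s' = μ s := by
      intro s _
      calc ∑ a, ∑ s', μ s * π s a * M.T s a s'
          = ∑ a, μ s * π s a * ∑ s', M.T s a s' := by
            exact Finset.sum_congr rfl fun a _ => (Finset.mul_sum _ _ _).symm
        _ = ∑ a, μ s * π s a := by simp [hT.2]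
        _ = μ s * ∑ a, π s a := by rw [Finset.mul_sum]
        _ = μ s := by rw [hπ.2, mul_one]
    rw [Finset.sum_congr rfl h2, hμ.2]

lemma stateDist_isDist {M : MDP S A} {π : S → A → ℝ} {μ : S → ℝ}
    (hT : IsKernel M.T) (hπ : IsPolicy π) (hμ : IsDist μ) (t : ℕ) :
    IsDist (stateDist M π μ t) := by
  induction t with
  | zero => exact hμ
  | succ t ih => rw [stateDist_succ_eq]; exact stepD_isDist hT hπ ih

lemma dirac_isDist (x : S) : IsDist (dirac x) := by
  constructor
  · intro y; unfold dirac; split <;> norm_num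
  · simp [dirac]

lemma abs_EW_le {π : S → A → ℝ} {μ : S → ℝ} {f : S → A → ℝ} {B : ℝ}
    (hπ : IsPolicy π) (hμ : IsDist μ) (hB : ∀ s a, |f s a| ≤ B) :
    |EW π μ f| ≤ B := by
  have key : ∑ s, ∑ a, μ s * π s a = 1 := by
    calc ∑ s, ∑ a, μ s * π s a = ∑ s, μ s * ∑ a, π s a := by
          exact Finset.sum_congr rfl fun s _ => (Finset.mul_sum _ _ _).symm
      _ = ∑ s, μ s := by simp [hπ.2]
      _ = 1 := hμ.2
  calc |EW π μ f| ≤ ∑ s, |∑ a, μ s * π s a * f s a| := Finset.abs_sum_le_sum_abs _ _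
    _ ≤ ∑ s, ∑ a, |μ s * π s a * f s a| :=
        Finset.sum_le_sum fun s _ => Finset.abs_sum_le_sum_abs _ _
    _ ≤ ∑ s, ∑ a, μ s * π s a * B := by
        refine Finset.sum_le_sum fun s _ => Finset.sum_le_sum fun a _ => ?_
        rw [abs_mul, abs_mul, abs_of_nonneg (hμ.1 s), abs_of_nonneg (hπ.1 s a)]
        exact mul_le_mul_of_nonneg_left (hB s a) (mul_nonneg (hμ.1 s) (hπ.1 s a))
    _ = B := by
        simp only [← Finset.sum_mul]
        rw [key, one_mul]

lemma summable_geom_bdd {γ B : ℝ} (h0 : 0 ≤ γ) (h1 : γ < 1) {g : ℕ → ℝ}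
    (hg : ∀ t, |g t| ≤ B) : Summable fun t => γ ^ t * g t := by
  refine Summable.of_norm_bounded ((summable_geometric_of_lt_one h0 h1).mul_right B) ?_
  intro t
  rw [Real.norm_eq_abs, abs_mul, abs_pow, abs_of_nonneg h0]
  exact mul_le_mul_of_nonneg_left (hg t) (pow_nonneg h0 t)

lemma EW_sum (π : S → A → ℝ) (c : S → ℝ) (ν : S → S → ℝ) (f : S → A → ℝ) :
    EW π (fun s => ∑ x, c x * ν x s) f = ∑ x, c x * EW π (ν x) f := by
  unfold EW
  calc ∑ s, ∑ a, (∑ x, c x * ν x s) * π s a * f s a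
      = ∑ s, ∑ a, ∑ x, c x * (ν x s * π s a * f s a) := by
        refine Finset.sum_congr rfl fun s _ => Finset.sum_congr rfl fun a _ => ?_
        rw [Finset.sum_mul, Finset.sum_mul]
        exact Finset.sum_congr rfl fun x _ => by ring
    _ = ∑ x, ∑ s, ∑ a, c x * (ν x s * π s a * f s a) :=
        sum_rot fun s a x => c x * (ν x s * π s a * f s a)
    _ = ∑ x, c x * ∑ s, ∑ a, ν x s * π s a * f s a := by
        refine Finset.sum_congr rfl fun x _ => ?_
        rw [Finset.mul_sum]
        exact Finset.sum_congr rfl fun s _ => (Finset.mul_sum _ _ _).symm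

lemma stateDist_linear (M : MDP S A) (π : S → A → ℝ) (μ : S → ℝ) :
    ∀ t s, stateDist M π μ t s = ∑ x, μ x * stateDist M π (dirac x) t s := by
  intro t
  induction t with
  | zero =>
      intro s
      simp [stateDist, dirac, mul_ite]
  | succ t ih =>
      intro s'
      have hμt : stateDist M π μ t = fun s => ∑ x, μ x * stateDist M π (dirac x) t s :=
        funext fun s => ih s
      show EW π (stateDist M π μ t) (fun s a => M.T s a s') = _
      rw [hμt, EW_sum]
      rfl

lemma expRewardAt_linear (M : MDP S A) (π : S → A → ℝ) (μ : S → ℝ) (t : ℕ) :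
    expRewardAt M π μ t = ∑ x, μ x * expRewardAt M π (dirac x) t := by
  show EW π (stateDist M π μ t) M.r = _
  rw [show stateDist M π μ t = fun s => ∑ x, μ x * stateDist M π (dirac x) t s from
    funext fun s => stateDist_linear M π μ t s, EW_sum]
  rfl

lemma abs_fn_le (f : S → A → ℝ) : ∀ s a, |f s a| ≤ ∑ x, ∑ b, |f x b| := by
  intro s a
  calc |f s a| ≤ ∑ b, |f s b| :=
        Finset.single_le_sum (f := fun b => |f s b|) (fun b _ => abs_nonneg _)
          (Finset.mem_univ a)
    _ ≤ ∑ x, ∑ b, |f x b| :=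
        Finset.single_le_sum (f := fun x => ∑ b, |f x b|)
          (fun x _ => Finset.sum_nonneg fun b _ => abs_nonneg _) (Finset.mem_univ s)


lemma abs_r_le (M : MDP S A) : ∀ s a, |M.r s a| ≤ ∑ s, ∑ a, |M.r s a| :=
  fun s a => abs_fn_le M.r s a

lemma summable_expReward (M : MDP S A) (π : S → A → ℝ) {μ : S → ℝ}
    (hT : IsKernel M.T) (hπ : IsPolicy π) (h0 : 0 ≤ M.γ) (h1 : M.γ < 1) (hμ : IsDist μ) :
    Summable fun t => M.γ ^ t * expRewardAt M π μ t := by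
  refine summable_geom_bdd h0 h1 (B := ∑ s, ∑ a, |M.r s a|) ?_
  intro t
  exact abs_EW_le hπ (stateDist_isDist hT hπ hμ t) (abs_r_le M)

lemma Jval_eq_tsum (M : MDP S A) (π : S → A → ℝ) (μ₀ : S → ℝ)
    (hT : IsKernel M.T) (hπ : IsPolicy π) (h0 : 0 ≤ M.γ) (h1 : M.γ < 1) :
    Jval M π μ₀ = ∑' t, M.γ ^ t * expRewardAt M π μ₀ t := by
  have hsum : ∀ x : S, Summable fun t => M.γ ^ t * expRewardAt M π (dirac x) t :=
    fun x => summable_expReward M π hT hπ h0 h1 (dirac_isDist x)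
  unfold Jval
  have hV : ∀ s : S, Vval M π s = ∑' t, M.γ ^ t * expRewardAt M π (dirac s) t :=
    fun s => rfl
  calc ∑ s, μ₀ s * Vval M π s
      = ∑ s, ∑' t, μ₀ s * (M.γ ^ t * expRewardAt M π (dirac s) t) := by
        refine Finset.sum_congr rfl fun s _ => ?_
        rw [hV, tsum_mul_left]
    _ = ∑' t, ∑ s, μ₀ s * (M.γ ^ t * expRewardAt M π (dirac s) t) :=
        (Summable.tsum_finsetSum fun x _ => (hsum x).mul_left (μ₀ x)).symm
    _ = ∑' t, M.γ ^ t * expRewardAt M π μ₀ t := by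
        refine tsum_congr fun t => ?_
        rw [expRewardAt_linear, Finset.mul_sum]
        exact Finset.sum_congr rfl fun x _ => by ring

lemma expRewardAt_succ (M : MDP S A) (π : S → A → ℝ) (μ : S → ℝ) (t : ℕ) :
    expRewardAt M π μ (t + 1) = expRewardAt M π (stepD M π μ) t := by
  unfold expRewardAt
  rw [stateDist_shift]

lemma Jval_rec (M : MDP S A) (π : S → A → ℝ) (μ : S → ℝ)
    (hT : IsKernel M.T) (hπ : IsPolicy π) (h0 : 0 ≤ M.γ) (h1 : M.γ < 1) (hμ : IsDist μ) :
    Jval M π μ = EW π μ M.r + M.γ * Jval M π (stepD M π μ) := by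
  rw [Jval_eq_tsum M π μ hT hπ h0 h1, Jval_eq_tsum M π (stepD M π μ) hT hπ h0 h1]
  rw [Summable.tsum_eq_zero_add (summable_expReward M π hT hπ h0 h1 hμ)]
  have h2 : ∀ t : ℕ, M.γ ^ (t + 1) * expRewardAt M π μ (t + 1)
      = M.γ * (M.γ ^ t * expRewardAt M π (stepD M π μ) t) := by
    intro t
    rw [expRewardAt_succ, pow_succ]
    ring
  rw [tsum_congr h2, tsum_mul_left, pow_zero, one_mul]
  rfl

lemma stepD_expect (M : MDP S A) (π : S → A → ℝ) (ν : S → ℝ) (V : S → ℝ) :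
    ∑ s', stepD M π ν s' * V s' = EW π ν (fun s a => ∑ s', M.T s a s' * V s') := by
  unfold stepD EW
  calc ∑ s', (∑ s, ∑ a, ν s * π s a * M.T s a s') * V s'
      = ∑ s', ∑ s, ∑ a, ν s * π s a * M.T s a s' * V s' := by
        refine Finset.sum_congr rfl fun s' _ => ?_
        rw [Finset.sum_mul]
        exact Finset.sum_congr rfl fun s _ => Finset.sum_mul _ _ _
    _ = ∑ s, ∑ a, ∑ s', ν s * π s a * M.T s a s' * V s' :=
        (sum_rot fun s a s' => ν s * π s a * M.T s a s' * V s').symm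
    _ = ∑ s, ∑ a, ν s * π s a * ∑ s', M.T s a s' * V s' := by
        refine Finset.sum_congr rfl fun s _ => Finset.sum_congr rfl fun a _ => ?_
        rw [Finset.mul_sum]
        exact Finset.sum_congr rfl fun s' _ => by ring

lemma EW_sub_smul (π : S → A → ℝ) (ν : S → ℝ) (f g : S → A → ℝ) (c : ℝ) :
    EW π ν (fun s a => f s a - c * g s a) = EW π ν f - c * EW π ν g := by
  unfold EW
  rw [Finset.mul_sum, ← Finset.sum_sub_distrib]
  refine Finset.sum_congr rfl fun s _ => ?_
  rw [Finset.mul_sum, ← Finset.sum_sub_distrib]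
  exact Finset.sum_congr rfl fun a _ => by ring

lemma EW_sub (π : S → A → ℝ) (ν : S → ℝ) (f g : S → A → ℝ) :
    EW π ν (fun s a => f s a - g s a) = EW π ν f - EW π ν g := by
  have := EW_sub_smul π ν f g 1
  simpa using this

lemma EW_mono {π : S → A → ℝ} {ν : S → ℝ} {f g : S → A → ℝ}
    (hν : ∀ s, 0 ≤ ν s) (hπ : IsPolicy π) (h : ∀ s a, f s a ≤ g s a) :
    EW π ν f ≤ EW π ν g := by
  refine Finset.sum_le_sum fun s _ => Finset.sum_le_sum fun a _ => ?_
  exact mul_le_mul_of_nonneg_left (h s a) (mul_nonneg (hν s) (hπ.1 s a))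

lemma abs_dot_le {μ V : S → ℝ} {B : ℝ} (hμ : IsDist μ) (hB : ∀ s, |V s| ≤ B) :
    |∑ s, μ s * V s| ≤ B := by
  calc |∑ s, μ s * V s| ≤ ∑ s, |μ s * V s| := Finset.abs_sum_le_sum_abs _ _
    _ ≤ ∑ s, μ s * B := by
        refine Finset.sum_le_sum fun s _ => ?_
        rw [abs_mul, abs_of_nonneg (hμ.1 s)]
        exact mul_le_mul_of_nonneg_left (hB s) (hμ.1 s)
    _ = B := by rw [← Finset.sum_mul, hμ.2, one_mul]

end Aux

/-- Penalized-reward guarantee: if the per-step model error satisfies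
`E_{s' ∼ T̂(·|s,a)}[V^π_M(s')] - E_{s' ∼ T(·|s,a)}[V^π_M(s')] ≤ u(s,a)` for an
admissible error estimator `u ≥ 0`, then for the penalized MDP `M̃` with reward
`r̃ = r - γ u` and dynamics `T̂`, we have `J(π,M) ≥ J(π,M̃)` for every such policy `π`. -/
theorem penalized_reward_guarantee (M Mhat : MDP S A) (u : S → A → ℝ) (μ₀ : S → ℝ)
    (hr : M.r = Mhat.r) (hγ : M.γ = Mhat.γ) (hγ0 : 0 < M.γ) (hγ1 : M.γ < 1)
    (hT : IsKernel M.T) (hThat : IsKernel Mhat.T) (hμ : IsDist μ₀)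
    (hu0 : ∀ s a, 0 ≤ u s a) :
    ∀ π : S → A → ℝ, IsPolicy π →
      (∀ s a, (∑ s', Mhat.T s a s' * Vval M π s') - (∑ s', M.T s a s' * Vval M π s')
        ≤ u s a) →
      Jval M π μ₀ ≥
        Jval ⟨fun s a => M.r s a - M.γ * u s a, Mhat.T, M.γ⟩ π μ₀ := by
  intro π hπ hZle
  have h0 : (0 : ℝ) ≤ M.γ := le_of_lt hγ0
  set Mt : MDP S A := ⟨fun s a => M.r s a - M.γ * u s a, Mhat.T, M.γ⟩ with hMtdef
  show Jval M π μ₀ ≥ Jval Mt π μ₀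
  set V : S → ℝ := Vval M π with hVdef
  set Z : S → A → ℝ :=
    fun s a => (∑ s', Mhat.T s a s' * V s') - (∑ s', M.T s a s' * V s') with hZdef
  set P : ℕ → S → ℝ := fun t => stateDist Mt π μ₀ t with hPdef
  have hTt : IsKernel Mt.T := hThat
  have hPd : ∀ t, IsDist (P t) := fun t => stateDist_isDist hTt hπ hμ t
  -- one-step comparison
  have hstep : ∀ t, Jval M π (stepD M π (P t)) = Jval M π (P (t + 1)) - EW π (P t) Z := by
    intro t
    have e1 : Jval M π (stepD M π (P t))
        = EW π (P t) (fun s a => ∑ s', M.T s a s' * V s') := stepD_expect M π (P t) V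
    have e2 : Jval M π (P (t + 1))
        = EW π (P t) (fun s a => ∑ s', Mhat.T s a s' * V s') := stepD_expect Mt π (P t) V
    have e3 : EW π (P t) Z
        = EW π (P t) (fun s a => ∑ s', Mhat.T s a s' * V s')
          - EW π (P t) (fun s a => ∑ s', M.T s a s' * V s') :=
      EW_sub π (P t) _ _
    linarith [e1, e2, e3]
  set f : ℕ → ℝ := fun t => M.γ ^ t * Jval M π (P t) with hf
  -- telescoping identity
  have hrec : ∀ t, f t - f (t + 1)
      = M.γ ^ t * EW π (P t) M.r - M.γ * (M.γ ^ t * EW π (P t) Z) := by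
    intro t
    have h1 : Jval M π (P t) = EW π (P t) M.r + M.γ * Jval M π (stepD M π (P t)) :=
      Jval_rec M π (P t) hT hπ h0 hγ1 (hPd t)
    have h2 := hstep t
    show M.γ ^ t * Jval M π (P t) - M.γ ^ (t + 1) * Jval M π (P (t + 1)) = _
    rw [h1, h2, pow_succ]
    ring
  -- bounds and summability
  have hBV : ∀ s, |V s| ≤ ∑ x, |V x| := fun s =>
    Finset.single_le_sum (f := fun x => |V x|) (fun x _ => abs_nonneg _) (Finset.mem_univ s)
  have hsumR : Summable fun t => M.γ ^ t * EW π (P t) M.r :=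
    summable_geom_bdd h0 hγ1 fun t => abs_EW_le hπ (hPd t) (abs_fn_le M.r)
  have hsumZ : Summable fun t => M.γ ^ t * EW π (P t) Z :=
    summable_geom_bdd h0 hγ1 fun t => abs_EW_le hπ (hPd t) (abs_fn_le Z)
  have hsumU : Summable fun t => M.γ ^ t * EW π (P t) u :=
    summable_geom_bdd h0 hγ1 fun t => abs_EW_le hπ (hPd t) (abs_fn_le u)
  have hsumg : Summable fun t =>
      M.γ ^ t * EW π (P t) M.r - M.γ * (M.γ ^ t * EW π (P t) Z) :=
    hsumR.sub (hsumZ.mul_left M.γ)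
  -- f tends to zero
  have hfz : Filter.Tendsto f Filter.atTop (nhds 0) := by
    apply squeeze_zero_norm (a := fun t => (∑ x, |V x|) * M.γ ^ t)
    · intro t
      calc ‖f t‖ = M.γ ^ t * |Jval M π (P t)| := by
            show ‖M.γ ^ t * Jval M π (P t)‖ = _
            rw [Real.norm_eq_abs, abs_mul, abs_pow, abs_of_nonneg h0]
        _ ≤ M.γ ^ t * (∑ x, |V x|) :=
            mul_le_mul_of_nonneg_left (abs_dot_le (hPd t) hBV) (pow_nonneg h0 t)
        _ = (∑ x, |V x|) * M.γ ^ t := mul_comm _ _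
    · have h1 : Filter.Tendsto (fun t : ℕ => M.γ ^ t) Filter.atTop (nhds 0) :=
        tendsto_pow_atTop_nhds_zero_of_lt_one h0 hγ1
      simpa using h1.const_mul (∑ x, |V x|)
  -- tsum of telescoping series equals f 0
  have htel : ∀ N, ∑ t ∈ Finset.range N,
      (M.γ ^ t * EW π (P t) M.r - M.γ * (M.γ ^ t * EW π (P t) Z)) = f 0 - f N := by
    intro N
    rw [← Finset.sum_range_sub' f N]
    exact Finset.sum_congr rfl fun t _ => (hrec t).symm
  have hlim1 := hsumg.hasSum.tendsto_sum_nat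
  simp only [htel] at hlim1
  have hlim2 : Filter.Tendsto (fun N => f 0 - f N) Filter.atTop (nhds (f 0 - 0)) :=
    tendsto_const_nhds.sub hfz
  have hf0 : (∑' t, (M.γ ^ t * EW π (P t) M.r - M.γ * (M.γ ^ t * EW π (P t) Z)))
      = f 0 := by
    have := tendsto_nhds_unique hlim1 hlim2
    rwa [sub_zero] at this
  have hf00 : f 0 = Jval M π μ₀ := by
    show M.γ ^ 0 * Jval M π (P 0) = Jval M π μ₀
    rw [pow_zero, one_mul]
    rfl
  have hJM : Jval M π μ₀
      = (∑' t, M.γ ^ t * EW π (P t) M.r) - M.γ * ∑' t, M.γ ^ t * EW π (P t) Z := by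
    calc Jval M π μ₀ = f 0 := hf00.symm
      _ = ∑' t, (M.γ ^ t * EW π (P t) M.r - M.γ * (M.γ ^ t * EW π (P t) Z)) := hf0.symm
      _ = (∑' t, M.γ ^ t * EW π (P t) M.r) - ∑' t, M.γ * (M.γ ^ t * EW π (P t) Z) :=
          Summable.tsum_sub hsumR (hsumZ.mul_left M.γ)
      _ = (∑' t, M.γ ^ t * EW π (P t) M.r) - M.γ * ∑' t, M.γ ^ t * EW π (P t) Z := by
          rw [tsum_mul_left]
  have hJMt : Jval Mt π μ₀
      = (∑' t, M.γ ^ t * EW π (P t) M.r) - M.γ * ∑' t, M.γ ^ t * EW π (P t) u := by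
    have hEq : ∀ t, Mt.γ ^ t * expRewardAt Mt π μ₀ t
        = M.γ ^ t * EW π (P t) M.r - M.γ * (M.γ ^ t * EW π (P t) u) := by
      intro t
      have h1 : expRewardAt Mt π μ₀ t = EW π (P t) (fun s a => M.r s a - M.γ * u s a) := rfl
      have h2 : (Mt.γ : ℝ) = M.γ := rfl
      rw [h2, h1, EW_sub_smul π (P t) M.r u M.γ]
      ring
    rw [Jval_eq_tsum Mt π μ₀ hTt hπ h0 hγ1, tsum_congr hEq,
      Summable.tsum_sub hsumR (hsumU.mul_left M.γ), tsum_mul_left]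
  -- conclude
  have hZU : (∑' t, M.γ ^ t * EW π (P t) Z) ≤ ∑' t, M.γ ^ t * EW π (P t) u := by
    refine Summable.tsum_le_tsum (fun t => ?_) hsumZ hsumU
    refine mul_le_mul_of_nonneg_left ?_ (pow_nonneg h0 t)
    refine EW_mono (hPd t).1 hπ fun s a => ?_
    show (∑ s', Mhat.T s a s' * V s') - (∑ s', M.T s a s' * V s') ≤ u s a
    exact hZle s a
  rw [ge_iff_le, hJM, hJMt]
  have := mul_le_mul_of_nonneg_left hZU h0
  linarith
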